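/- arXiv:2312.05121 — 5 statements merged into one kernel-verified Lean document; each statement's English description precedes it below -/
import Mathlib

section
/- For the polynomial g(t) = (t+1) t^2 (t+1/2)^2 (t^2-1/36)(t^2-1/9)(t-1/2)^2, one has g(1) = 35/36, and the zeroth Gegenbauer coefficient of g for dimension n = 48 equals 1/53913600, so that g(1)/g_0 = 52416000. -/
open Polynomial Finset
open scoped Classical

/-- Gegenbauer polynomials for dimension `n`, normalized by `P_i(1) = 1`. -/
noncomputable def gegen (n : ℕ) : ℕ → Polynomial ℝ
  | 0 => 1
  | 1 => X
  | (i + 2) =>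
      Polynomial.C (((n : ℝ) + i - 1)⁻¹) *
        (Polynomial.C ((n : ℝ) + 2 * i) * X * gegen n (i + 1) -
          Polynomial.C ((i : ℝ) + 1) * gegen n i)

/-- The `i`-th moment of a code. -/
noncomputable def moment (n i : ℕ) (A : Finset (EuclideanSpace ℝ (Fin n))) : ℝ :=
  ∑ x ∈ A, ∑ y ∈ A, (gegen n i).eval (inner ℝ x y : ℝ)

/-- A spherical code: a finite set of unit vectors. -/
def onSphere {n : ℕ} (A : Finset (EuclideanSpace ℝ (Fin n))) : Prop :=
  ∀ x ∈ A, ‖x‖ = 1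

/-- A spherical `τ`-design, characterized by vanishing of the first `τ` moments. -/
def isDesign (n τ : ℕ) (A : Finset (EuclideanSpace ℝ (Fin n))) : Prop :=
  ∀ i, 1 ≤ i → i ≤ τ → moment n i A = 0

/-- The zeroth Gegenbauer coefficient of a polynomial in dimension `n`:
its average against the weight `(1-t^2)^((n-3)/2)` on `[-1,1]`. -/
noncomputable def coeff0 (n : ℕ) (f : Polynomial ℝ) : ℝ :=
  (∫ t in (-1 : ℝ)..1, f.eval t * (1 - t ^ 2) ^ (((n : ℝ) - 3) / 2)) /
  (∫ t in (-1 : ℝ)..1, (1 - t ^ 2) ^ (((n : ℝ) - 3) / 2))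

noncomputable def hpoly : Polynomial ℝ :=
  (X + 1) ^ 2 * X ^ 2 * (X + Polynomial.C (1 / 2)) ^ 2 *
    (X ^ 2 - Polynomial.C (1 / 36)) * (X ^ 2 - Polynomial.C (1 / 9)) *
    (X - Polynomial.C (1 / 2))

noncomputable def gpoly : Polynomial ℝ :=
  (X + 1) * X ^ 2 * (X + Polynomial.C (1 / 2)) ^ 2 *
    (X ^ 2 - Polynomial.C (1 / 36)) * (X ^ 2 - Polynomial.C (1 / 9)) *
    (X - Polynomial.C (1 / 2)) ^ 2

noncomputable def upoly : Polynomial ℝ :=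
  (X + 1) * X ^ 2 * (X ^ 2 - Polynomial.C (1 / 36)) ^ 2 *
    (X ^ 2 - Polynomial.C (1 / 9)) * (X ^ 2 - Polynomial.C (1 / 4))


set_option maxRecDepth 8000

open Real in
noncomputable def Efun : ℝ → ℝ := fun u =>
  u / 5184 - 53 * u ^ 2 / 5184 + 175 * u ^ 3 / 1296 - 23 * u ^ 4 / 36 + u ^ 5

noncomputable def Hfun : ℝ → ℝ := fun s => Efun (1 - s ^ 2) * s ^ 46

@[fun_prop] lemma Hfun_cont : Continuous Hfun := by unfold Hfun Efun; fun_prop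

lemma Hfun_expand (s : ℝ) : Hfun s =
    35/72 * s ^ 46 - 4889/1728 * s ^ 48 + 34015/5184 * s ^ 50
      - 9823/1296 * s ^ 52 + 157/36 * s ^ 54 - s ^ 56 := by
  simp [Hfun, Efun]; ring

open Real in
lemma gpoly_eval (c : ℝ) : gpoly.eval c = (1 + c) * Efun (c ^ 2) := by
  simp [gpoly, Efun]; ring

open Real in
lemma substW (f : ℝ → ℝ) (hf : Continuous f) :
    (∫ t in (-1:ℝ)..1, f t * (1 - t ^ 2) ^ ((45:ℝ)/2)) =
      ∫ x in (0:ℝ)..π, f (Real.cos x) * Real.sin x ^ 46 := by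
  set F : ℝ → ℝ := fun u => f u * (1 - u ^ 2) ^ ((45:ℝ)/2) with hF
  have hFc : Continuous F := by
    apply hf.mul
    apply Continuous.rpow_const (by fun_prop)
    intro x; right; norm_num
  have key := intervalIntegral.integral_comp_smul_deriv (a := (0:ℝ)) (b := π)
    (f := Real.cos) (f' := fun x => -Real.sin x) (g := F)
    (fun x _ => Real.hasDerivAt_cos x) (by fun_prop) hFc
  simp only [Real.cos_zero, Real.cos_pi, smul_eq_mul, Function.comp] at key
  have key2 : (∫ t in (-1:ℝ)..1, F t) = ∫ x in (0:ℝ)..π, Real.sin x * F (Real.cos x) := by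
    rw [intervalIntegral.integral_symm, ← key, ← intervalIntegral.integral_neg]
    congr 1; funext x; ring
  rw [key2]
  apply intervalIntegral.integral_congr
  intro x hx
  rw [Set.uIcc_of_le Real.pi_pos.le] at hx
  have hs : 0 ≤ Real.sin x := Real.sin_nonneg_of_nonneg_of_le_pi hx.1 hx.2
  have h1 : (1 : ℝ) - Real.cos x ^ 2 = Real.sin x ^ 2 := by
    have := Real.sin_sq_add_cos_sq x; linarith
  simp only [hF, h1]
  have h2 : (Real.sin x ^ 2 : ℝ) ^ ((45:ℝ)/2) = Real.sin x ^ 45 := by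
    rw [← Real.rpow_natCast (Real.sin x) 2, ← Real.rpow_mul hs]
    norm_num
  rw [h2]; ring

open Real in
lemma oddzero (H : ℝ → ℝ) (hH : Continuous H) :
    (∫ x in (0:ℝ)..π, Real.cos x * H (Real.sin x)) = 0 := by
  have key := intervalIntegral.integral_comp_smul_deriv (a := (0:ℝ)) (b := π)
    (f := Real.sin) (f' := Real.cos) (g := H)
    (fun x _ => Real.hasDerivAt_sin x) (by fun_prop) hH
  simp only [Real.sin_zero, Real.sin_pi, smul_eq_mul, Function.comp,
    intervalIntegral.integral_same] at key
  exact key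

open Real in
lemma sinint : (∫ x in (0:ℝ)..π, Hfun (Real.sin x)) =
    (1 / 53913600) * ∫ x in (0:ℝ)..π, Real.sin x ^ 46 := by
  have h48 := integral_sin_pow (a := 0) (b := π) 46
  have h50 := integral_sin_pow (a := 0) (b := π) 48
  have h52 := integral_sin_pow (a := 0) (b := π) 50
  have h54 := integral_sin_pow (a := 0) (b := π) 52
  have h56 := integral_sin_pow (a := 0) (b := π) 54
  norm_num [Real.sin_pi] at h48 h50 h52 h54 h56
  simp only [Hfun_expand]
  rw [intervalIntegral.integral_sub (by apply Continuous.intervalIntegrable; fun_prop)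
        (by apply Continuous.intervalIntegrable; fun_prop),
      intervalIntegral.integral_add (by apply Continuous.intervalIntegrable; fun_prop)
        (by apply Continuous.intervalIntegrable; fun_prop),
      intervalIntegral.integral_sub (by apply Continuous.intervalIntegrable; fun_prop)
        (by apply Continuous.intervalIntegrable; fun_prop),
      intervalIntegral.integral_add (by apply Continuous.intervalIntegrable; fun_prop)
        (by apply Continuous.intervalIntegrable; fun_prop),
      intervalIntegral.integral_sub (by apply Continuous.intervalIntegrable; fun_prop)
        (by apply Continuous.intervalIntegrable; fun_prop)]
  simp only [intervalIntegral.integral_const_mul]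
  rw [h56, h54, h52, h50, h48]
  ring

open Real in
lemma coeff0_gpoly : coeff0 48 gpoly = 1 / 53913600 := by
  have h45 : (((48:ℕ):ℝ) - 3) / 2 = (45:ℝ)/2 := by norm_num
  rw [coeff0, h45]
  have hden := substW (fun _ => (1:ℝ)) continuous_const
  simp only [one_mul] at hden
  have hnum := substW (fun t => gpoly.eval t) gpoly.continuous
  rw [hnum, hden]
  have hpt : ∀ x : ℝ, gpoly.eval (Real.cos x) * Real.sin x ^ 46 =
      Real.cos x * Hfun (Real.sin x) + Hfun (Real.sin x) := by
    intro x
    rw [gpoly_eval, Real.cos_sq']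
    simp only [Hfun]; ring
  simp only [hpt]
  rw [intervalIntegral.integral_add
        (by apply Continuous.intervalIntegrable; fun_prop)
        (by apply Continuous.intervalIntegrable; fun_prop),
      oddzero Hfun Hfun_cont, zero_add, sinint]
  have hS : (0:ℝ) < ∫ x in (0:ℝ)..π, Real.sin x ^ 46 := integral_sin_pow_pos 46
  rw [mul_div_assoc, div_self hS.ne', mul_one]

theorem stmt4 : gpoly.eval 1 = 35 / 36 ∧ coeff0 48 gpoly = 1 / 53913600 ∧
    gpoly.eval 1 / coeff0 48 gpoly = 52416000 := by
  have h1 : gpoly.eval 1 = 35 / 36 := by simp [gpoly]; norm_num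
  exact ⟨h1, coeff0_gpoly, by rw [h1, coeff0_gpoly]; norm_num⟩
end

section
/- For the polynomial u(t) = (t+1) t^2 (t^2-1/36)^2 (t^2-1/9)(t^2-1/4), one has u(1) = 1225/972, and the zeroth Gegenbauer coefficient of u for dimension n = 48 equals 7/291133440, so that u(1)/u_0 = 52416000. -/
open Polynomial Finset
open scoped Classical

open MeasureTheory

open MeasureTheory

noncomputable def II (k : ℕ) : ℝ := ∫ t in (-1:ℝ)..1, t ^ k * (1 - t ^ 2) ^ ((45:ℝ)/2)

lemma wcont (e : ℝ) (he : 0 ≤ e) : Continuous fun t : ℝ => (1 - t ^ 2) ^ e :=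
  Continuous.rpow_const (by continuity) fun x => Or.inr he

lemma contAux (k : ℕ) (e : ℝ) (he : 0 ≤ e) :
    Continuous fun t : ℝ => t ^ k * (1 - t ^ 2) ^ e :=
  (continuous_pow k).mul (wcont e he)

lemma intAux (k : ℕ) : IntervalIntegrable
    (fun t : ℝ => t ^ k * (1 - t ^ 2) ^ ((45:ℝ)/2)) volume (-1) 1 :=
  (contAux k _ (by norm_num)).intervalIntegrable _ _

lemma II0_pos : 0 < II 0 := by
  rw [II]
  apply intervalIntegral.intervalIntegral_pos_of_pos_on (intAux 0)
  · intro x hx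
    have h1 : 0 < 1 - x ^ 2 := by nlinarith [hx.1, hx.2]
    simpa using Real.rpow_pos_of_pos h1 _
  · norm_num

lemma II_odd (m : ℕ) : II (2 * m + 1) = 0 := by
  have h := intervalIntegral.integral_comp_neg (a := (-1:ℝ)) (b := 1)
      (fun t => t ^ (2*m+1) * (1 - t ^ 2) ^ ((45:ℝ)/2))
  have h2 : ∀ x : ℝ, (-x) ^ (2*m+1) * (1 - (-x) ^ 2) ^ ((45:ℝ)/2)
      = -(x ^ (2*m+1) * (1 - x ^ 2) ^ ((45:ℝ)/2)) := by
    intro x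
    rw [Odd.neg_pow ⟨m, by ring⟩, neg_sq]
    ring
  simp only [h2, neg_neg, intervalIntegral.integral_neg] at h
  have : II (2*m+1) = - II (2*m+1) := by rw [II]; exact h.symm
  linarith

lemma w47 (t : ℝ) : (1 - t^2) ^ ((47:ℝ)/2) = (1 - t^2) ^ ((45:ℝ)/2) * (1 - t^2) := by
  rcases eq_or_ne (1 - t^2) 0 with h | h
  · rw [h, Real.zero_rpow (by norm_num), mul_zero]
  · rw [show (47:ℝ)/2 = 45/2 + 1 by norm_num, Real.rpow_add_one h]

lemma II_rec (m : ℕ) : (2*(m:ℝ) + 48) * II (2*m+2) = (2*(m:ℝ)+1) * II (2*m) := by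
  have hF : ∀ t : ℝ, HasDerivAt (fun t : ℝ => t ^ (2*m+1) * (1 - t ^ 2) ^ ((47:ℝ)/2))
      ((2*(m:ℝ)+1) * (t ^ (2*m) * (1 - t^2) ^ ((45:ℝ)/2))
        - (2*(m:ℝ)+1) * (t ^ (2*m+2) * (1 - t^2) ^ ((45:ℝ)/2))
        - 47 * (t ^ (2*m+2) * (1 - t^2) ^ ((45:ℝ)/2))) t := by
    intro t
    have h1 : HasDerivAt (fun t:ℝ => 1 - t^2) (-(2*t)) t := by
      simpa using ((hasDerivAt_pow 2 t).const_sub 1)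
    have h2 : HasDerivAt (fun t:ℝ => (1 - t^2) ^ ((47:ℝ)/2))
        ((47:ℝ)/2 * (1 - t^2) ^ ((47:ℝ)/2 - 1) * (-(2*t))) t :=
      (Real.hasDerivAt_rpow_const (p := (47:ℝ)/2) (Or.inr (by norm_num))).comp t h1
    have h3 : HasDerivAt (fun t:ℝ => t ^ (2*m+1)) ((2*(m:ℝ)+1) * t ^ (2*m)) t := by
      have := hasDerivAt_pow (2*m+1) t
      norm_num at this
      convert this using 2
    have h4 := h3.mul h2
    refine h4.congr_deriv ?_
    rw [show (47:ℝ)/2 - 1 = 45/2 by norm_num, w47 t]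
    ring
  have hcont : Continuous (fun t : ℝ =>
      (2*(m:ℝ)+1) * (t ^ (2*m) * (1 - t^2) ^ ((45:ℝ)/2))
        - (2*(m:ℝ)+1) * (t ^ (2*m+2) * (1 - t^2) ^ ((45:ℝ)/2))
        - 47 * (t ^ (2*m+2) * (1 - t^2) ^ ((45:ℝ)/2))) := by
    have c1 := contAux (2*m) ((45:ℝ)/2) (by norm_num)
    have c2 := contAux (2*m+2) ((45:ℝ)/2) (by norm_num)
    exact ((continuous_const.mul c1).sub (continuous_const.mul c2)).sub
      (continuous_const.mul c2)
  have hzero := intervalIntegral.integral_eq_sub_of_hasDerivAt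
      (a := (-1:ℝ)) (b := 1) (fun t _ => hF t) (hcont.intervalIntegrable _ _)
  rw [show ((1:ℝ)) ^ (2*m+1) * (1 - (1:ℝ) ^ 2) ^ ((47:ℝ)/2)
      - ((-1:ℝ)) ^ (2*m+1) * (1 - (-1:ℝ) ^ 2) ^ ((47:ℝ)/2) = 0 by
    norm_num [Real.zero_rpow]] at hzero
  rw [intervalIntegral.integral_sub (((intAux (2*m)).const_mul _).sub
        ((intAux (2*m+2)).const_mul _)) ((intAux (2*m+2)).const_mul _),
      intervalIntegral.integral_sub ((intAux (2*m)).const_mul _)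
        ((intAux (2*m+2)).const_mul _),
      intervalIntegral.integral_const_mul, intervalIntegral.integral_const_mul,
      intervalIntegral.integral_const_mul] at hzero
  rw [II, II]
  linarith [hzero]

lemma hnum : (∫ t in (-1:ℝ)..1, upoly.eval t * (1 - t ^ 2) ^ ((45:ℝ)/2))
    = II 11 + (II 10 + ((-(5/12))*II 9 + ((-(5/12))*II 8 + ((7/144)*II 7 +
      ((7/144)*II 6 + ((-(85/46656))*II 5 + ((-(85/46656))*II 4 +
      ((1/46656)*II 3 + (1/46656)*II 2)))))))) := by
  have hpt : ∀ t : ℝ, upoly.eval t * (1 - t ^ 2) ^ ((45:ℝ)/2)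
      = t^11 * (1 - t ^ 2) ^ ((45:ℝ)/2) + (t^10 * (1 - t ^ 2) ^ ((45:ℝ)/2) +
        ((-(5/12))*(t^9 * (1 - t ^ 2) ^ ((45:ℝ)/2)) +
        ((-(5/12))*(t^8 * (1 - t ^ 2) ^ ((45:ℝ)/2)) +
        ((7/144)*(t^7 * (1 - t ^ 2) ^ ((45:ℝ)/2)) +
        ((7/144)*(t^6 * (1 - t ^ 2) ^ ((45:ℝ)/2)) +
        ((-(85/46656))*(t^5 * (1 - t ^ 2) ^ ((45:ℝ)/2)) +
        ((-(85/46656))*(t^4 * (1 - t ^ 2) ^ ((45:ℝ)/2)) +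
        ((1/46656)*(t^3 * (1 - t ^ 2) ^ ((45:ℝ)/2)) +
        (1/46656)*(t^2 * (1 - t ^ 2) ^ ((45:ℝ)/2)))))))))) := by
    intro t
    simp only [upoly, eval_mul, eval_add, eval_pow, eval_sub, eval_X, eval_C, eval_one]
    ring
  simp only [II, hpt]
  have T2 := (intAux 2).const_mul ((1:ℝ)/46656)
  have T3 := (intAux 3).const_mul ((1:ℝ)/46656)
  have S9 := T3.add T2
  have S8 := ((intAux 4).const_mul (-(85/46656):ℝ)).add S9
  have S7 := ((intAux 5).const_mul (-(85/46656):ℝ)).add S8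
  have S6 := ((intAux 6).const_mul ((7:ℝ)/144)).add S7
  have S5 := ((intAux 7).const_mul ((7:ℝ)/144)).add S6
  have S4 := ((intAux 8).const_mul (-(5/12):ℝ)).add S5
  have S3 := ((intAux 9).const_mul (-(5/12):ℝ)).add S4
  have S2 := (intAux 10).add S3
  rw [intervalIntegral.integral_add (intAux 11) S2,
      intervalIntegral.integral_add (intAux 10) S3,
      intervalIntegral.integral_add ((intAux 9).const_mul _) S4,
      intervalIntegral.integral_add ((intAux 8).const_mul _) S5,
      intervalIntegral.integral_add ((intAux 7).const_mul _) S6,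
      intervalIntegral.integral_add ((intAux 6).const_mul _) S7,
      intervalIntegral.integral_add ((intAux 5).const_mul _) S8,
      intervalIntegral.integral_add ((intAux 4).const_mul _) S9,
      intervalIntegral.integral_add T3 T2]
  simp only [intervalIntegral.integral_const_mul]


theorem stmt5 : upoly.eval 1 = 1225 / 972 ∧ coeff0 48 upoly = 7 / 291133440 ∧
    upoly.eval 1 / coeff0 48 upoly = 52416000 := by
  have he : upoly.eval 1 = 1225 / 972 := by
    simp only [upoly, eval_mul, eval_add, eval_pow, eval_sub, eval_X, eval_C, eval_one]
    norm_num
  have e45 : (((48:ℕ):ℝ) - 3) / 2 = 45/2 := by norm_num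
  have hden : (∫ t in (-1:ℝ)..1, (1 - t ^ 2) ^ ((45:ℝ)/2)) = II 0 := by
    rw [II]; simp only [pow_zero, one_mul]
  have h1 := II_rec 0
  have h2 := II_rec 1
  have h3 := II_rec 2
  have h4 := II_rec 3
  have h5 := II_rec 4
  have o1 := II_odd 1
  have o2 := II_odd 2
  have o3 := II_odd 3
  have o4 := II_odd 4
  have o5 := II_odd 5
  norm_num at h1 h2 h3 h4 h5 o1 o2 o3 o4 o5
  have hval : (∫ t in (-1:ℝ)..1, upoly.eval t * (1 - t ^ 2) ^ ((45:ℝ)/2))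
      = (7/291133440) * II 0 := by
    rw [hnum, o1, o2, o3, o4, o5]
    linarith
  have hc : coeff0 48 upoly = 7 / 291133440 := by
    rw [coeff0, e45, hden, hval, mul_div_assoc, div_self II0_pos.ne']
    norm_num
  refine ⟨he, hc, ?_⟩
  rw [he, hc]; norm_num
end

section
/- In the expansion h(t) = Σ_{i=0}^{11} h_i P_i^{(48)}(t) of h(t) = (t+1)^2 t^2 (t+1/2)^2 (t^2-1/36)(t^2-1/9)(t-1/2) in Gegenbauer polynomials for dimension 48, all even-index coefficients h_0, h_2, h_4, h_6, h_8, h_10 are strictly positive. -/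
open Polynomial Finset
open scoped Classical

lemma gegen_step (n i : ℕ) : gegen n (i + 2) =
    Polynomial.C (((n : ℝ) + i - 1)⁻¹) *
      (Polynomial.C ((n : ℝ) + 2 * i) * X * gegen n (i + 1) -
        Polynomial.C ((i : ℝ) + 1) * gegen n i) := by
  rw [gegen]

lemma g0 : gegen 48 0 = Polynomial.C (1 : ℝ) := by
  rw [gegen]; simp

lemma g1 : gegen 48 1 = X := by rw [gegen]

lemma g2 : gegen 48 2 = Polynomial.C (-1/47 : ℝ) + Polynomial.C (48/47 : ℝ) * X ^ 2 := by
  rw [show (2:ℕ) = 0 + 2 from rfl, gegen_step, g1, g0]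
  apply Polynomial.funext; intro t
  simp only [Polynomial.eval_mul, Polynomial.eval_add, Polynomial.eval_sub,
    Polynomial.eval_C, Polynomial.eval_X, Polynomial.eval_pow, Polynomial.eval_one]
  norm_num; ring

lemma g3 : gegen 48 3 = Polynomial.C (-3/47 : ℝ) * X + Polynomial.C (50/47 : ℝ) * X ^ 3 := by
  rw [show (3:ℕ) = 1 + 2 from rfl, gegen_step, g2, g1]
  apply Polynomial.funext; intro t
  simp only [Polynomial.eval_mul, Polynomial.eval_add, Polynomial.eval_sub,
    Polynomial.eval_C, Polynomial.eval_X, Polynomial.eval_pow, Polynomial.eval_one]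
  norm_num; ring

lemma g4 : gegen 48 4 = Polynomial.C (3/2303 : ℝ) + Polynomial.C (-300/2303 : ℝ) * X ^ 2 + Polynomial.C (2600/2303 : ℝ) * X ^ 4 := by
  rw [show (4:ℕ) = 2 + 2 from rfl, gegen_step, g3, g2]
  apply Polynomial.funext; intro t
  simp only [Polynomial.eval_mul, Polynomial.eval_add, Polynomial.eval_sub,
    Polynomial.eval_C, Polynomial.eval_X, Polynomial.eval_pow, Polynomial.eval_one]
  norm_num; ring

lemma g5 : gegen 48 5 = Polynomial.C (15/2303 : ℝ) * X + Polynomial.C (-520/2303 : ℝ) * X ^ 3 + Polynomial.C (2808/2303 : ℝ) * X ^ 5 := by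
  rw [show (5:ℕ) = 3 + 2 from rfl, gegen_step, g4, g3]
  apply Polynomial.funext; intro t
  simp only [Polynomial.eval_mul, Polynomial.eval_add, Polynomial.eval_sub,
    Polynomial.eval_C, Polynomial.eval_X, Polynomial.eval_pow, Polynomial.eval_one]
  norm_num; ring

lemma g6 : gegen 48 6 = Polynomial.C (-5/39151 : ℝ) + Polynomial.C (780/39151 : ℝ) * X ^ 2 + Polynomial.C (-14040/39151 : ℝ) * X ^ 4 + Polynomial.C (7488/5593 : ℝ) * X ^ 6 := by
  rw [show (6:ℕ) = 4 + 2 from rfl, gegen_step, g5, g4]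
  apply Polynomial.funext; intro t
  simp only [Polynomial.eval_mul, Polynomial.eval_add, Polynomial.eval_sub,
    Polynomial.eval_C, Polynomial.eval_X, Polynomial.eval_pow, Polynomial.eval_one]
  norm_num; ring

lemma g7 : gegen 48 7 = Polynomial.C (-5/5593 : ℝ) * X + Polynomial.C (270/5593 : ℝ) * X ^ 3 + Polynomial.C (-432/799 : ℝ) * X ^ 5 + Polynomial.C (8352/5593 : ℝ) * X ^ 7 := by
  rw [show (7:ℕ) = 5 + 2 from rfl, gegen_step, g6, g5]
  apply Polynomial.funext; intro t
  simp only [Polynomial.eval_mul, Polynomial.eval_add, Polynomial.eval_sub,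
    Polynomial.eval_C, Polynomial.eval_X, Polynomial.eval_pow, Polynomial.eval_one]
  norm_num; ring

lemma g8 : gegen 48 8 = Polynomial.C (5/296429 : ℝ) + Polynomial.C (-1080/296429 : ℝ) * X ^ 2 + Polynomial.C (4320/42347 : ℝ) * X ^ 4 + Polynomial.C (-33408/42347 : ℝ) * X ^ 6 + Polynomial.C (501120/296429 : ℝ) * X ^ 8 := by
  rw [show (8:ℕ) = 6 + 2 from rfl, gegen_step, g7, g6]
  apply Polynomial.funext; intro t
  simp only [Polynomial.eval_mul, Polynomial.eval_add, Polynomial.eval_sub,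
    Polynomial.eval_C, Polynomial.eval_X, Polynomial.eval_pow, Polynomial.eval_one]
  norm_num; ring

lemma g9 : gegen 48 9 = Polynomial.C (45/296429 : ℝ) * X + Polynomial.C (-480/42347 : ℝ) * X ^ 3 + Polynomial.C (8352/42347 : ℝ) * X ^ 5 + Polynomial.C (-334080/296429 : ℝ) * X ^ 7 + Polynomial.C (575360/296429 : ℝ) * X ^ 9 := by
  rw [show (9:ℕ) = 7 + 2 from rfl, gegen_step, g8, g7]
  apply Polynomial.funext; intro t
  simp only [Polynomial.eval_mul, Polynomial.eval_add, Polynomial.eval_sub,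
    Polynomial.eval_C, Polynomial.eval_X, Polynomial.eval_pow, Polynomial.eval_one]
  norm_num; ring

lemma g10 : gegen 48 10 = Polynomial.C (-9/3260719 : ℝ) + Polynomial.C (360/465817 : ℝ) * X ^ 2 + Polynomial.C (-13920/465817 : ℝ) * X ^ 4 + Polynomial.C (167040/465817 : ℝ) * X ^ 6 + Polynomial.C (-5178240/3260719 : ℝ) * X ^ 8 + Polynomial.C (7364608/3260719 : ℝ) * X ^ 10 := by
  rw [show (10:ℕ) = 8 + 2 from rfl, gegen_step, g9, g8]
  apply Polynomial.funext; intro t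
  simp only [Polynomial.eval_mul, Polynomial.eval_add, Polynomial.eval_sub,
    Polynomial.eval_C, Polynomial.eval_X, Polynomial.eval_pow, Polynomial.eval_one]
  norm_num; ring

lemma g11 : gegen 48 11 = Polynomial.C (-9/296429 : ℝ) * X + Polynomial.C (870/296429 : ℝ) * X ^ 3 + Polynomial.C (-20880/296429 : ℝ) * X ^ 5 + Polynomial.C (1294560/2075003 : ℝ) * X ^ 7 + Polynomial.C (-4602880/2075003 : ℝ) * X ^ 9 + Polynomial.C (5523456/2075003 : ℝ) * X ^ 11 := by
  rw [show (11:ℕ) = 9 + 2 from rfl, gegen_step, g10, g9]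
  apply Polynomial.funext; intro t
  simp only [Polynomial.eval_mul, Polynomial.eval_add, Polynomial.eval_sub,
    Polynomial.eval_C, Polynomial.eval_X, Polynomial.eval_pow, Polynomial.eval_one]
  norm_num; ring

lemma hl : hpoly = Polynomial.C (-1/2592 : ℝ) * X ^ 2 + Polynomial.C (-1/648 : ℝ) * X ^ 3 + Polynomial.C (11/648 : ℝ) * X ^ 4 + Polynomial.C (97/1296 : ℝ) * X ^ 5 + Polynomial.C (-259/2592 : ℝ) * X ^ 6 + Polynomial.C (-959/1296 : ℝ) * X ^ 7 + Polynomial.C (-17/36 : ℝ) * X ^ 8 + Polynomial.C (29/18 : ℝ) * X ^ 9 + Polynomial.C (5/2 : ℝ) * X ^ 10 + Polynomial.C (1 : ℝ) * X ^ 11 := by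
  unfold hpoly
  apply Polynomial.funext; intro t
  simp only [Polynomial.eval_mul, Polynomial.eval_add, Polynomial.eval_sub,
    Polynomial.eval_C, Polynomial.eval_X, Polynomial.eval_pow, Polynomial.eval_one]
  ring

set_option maxHeartbeats 2000000 in
theorem stmt7 (c : ℕ → ℝ)
    (hc : hpoly = ∑ i ∈ Finset.range 12, Polynomial.C (c i) * gegen 48 i) :
    0 < c 0 ∧ 0 < c 2 ∧ 0 < c 4 ∧ 0 < c 6 ∧ 0 < c 8 ∧ 0 < c 10 := by
  rw [hl] at hc
  simp only [Finset.sum_range_succ, Finset.sum_range_zero, zero_add, g0, g1, g2, g3, g4, g5, g6, g7, g8, g9, g10, g11] at hc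
  have e0 := congrArg (fun p => Polynomial.coeff p 0) hc
  have e1 := congrArg (fun p => Polynomial.coeff p 1) hc
  have e2 := congrArg (fun p => Polynomial.coeff p 2) hc
  have e3 := congrArg (fun p => Polynomial.coeff p 3) hc
  have e4 := congrArg (fun p => Polynomial.coeff p 4) hc
  have e5 := congrArg (fun p => Polynomial.coeff p 5) hc
  have e6 := congrArg (fun p => Polynomial.coeff p 6) hc
  have e7 := congrArg (fun p => Polynomial.coeff p 7) hc
  have e8 := congrArg (fun p => Polynomial.coeff p 8) hc
  have e9 := congrArg (fun p => Polynomial.coeff p 9) hc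
  have e10 := congrArg (fun p => Polynomial.coeff p 10) hc
  have e11 := congrArg (fun p => Polynomial.coeff p 11) hc
  simp only [Polynomial.coeff_add, Polynomial.coeff_C_mul,
    Polynomial.coeff_X_pow, Polynomial.coeff_X, Polynomial.coeff_C, Polynomial.coeff_X_zero,
    Polynomial.coeff_X_one, mul_ite, mul_one, mul_zero] at e0 e1 e2 e3 e4 e5 e6 e7 e8 e9 e10 e11
  norm_num at e0 e1 e2 e3 e4 e5 e6 e7 e8 e9 e10 e11
  refine ⟨?_, ?_, ?_, ?_, ?_, ?_⟩ <;> linarith [e0,e1,e2,e3,e4,e5,e6,e7,e8,e9,e10,e11]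
end

section
/- In the Gegenbauer expansion (dimension 48) of h(t) = (t+1)^2 t^2 (t+1/2)^2 (t^2-1/36)(t^2-1/9)(t-1/2), the coefficient h_3 equals -118957/811814400, and all coefficients h_i for i ≥ 4 are strictly positive. -/
open Polynomial Finset
open scoped Classical

lemma gev (i : ℕ) (t : ℝ) : (gegen 48 (i+2)).eval t = ((48:ℝ)+i-1)⁻¹ * (((48:ℝ)+2*i)*t*(gegen 48 (i+1)).eval t - ((i:ℝ)+1)*(gegen 48 i).eval t) := by
  simp [gegen]

lemma gev0 (t : ℝ) : (gegen 48 0).eval t = 1 := by simp [gegen]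

lemma gev1 (t : ℝ) : (gegen 48 1).eval t = t := by simp [gegen]

theorem stmt8 (c : ℕ → ℝ)
    (hc : hpoly = ∑ i ∈ Finset.range 12, Polynomial.C (c i) * gegen 48 i) :
    c 3 = -(118957 / 811814400) ∧ ∀ i, 4 ≤ i → i ≤ 11 → 0 < c i := by
  have E0_0 : (gegen 48 0).eval 0 = 1 := gev0 _
  have E1_0 : (gegen 48 1).eval 0 = 0 := gev1 _
  have E2_0 : (gegen 48 2).eval 0 = ((-1)/47) := by
    rw [gev 0, E1_0, E0_0]; norm_num
  have E3_0 : (gegen 48 3).eval 0 = 0 := by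
    rw [gev 1, E2_0, E1_0]; norm_num
  have E4_0 : (gegen 48 4).eval 0 = (3/2303) := by
    rw [gev 2, E3_0, E2_0]; norm_num
  have E5_0 : (gegen 48 5).eval 0 = 0 := by
    rw [gev 3, E4_0, E3_0]; norm_num
  have E6_0 : (gegen 48 6).eval 0 = ((-5)/39151) := by
    rw [gev 4, E5_0, E4_0]; norm_num
  have E7_0 : (gegen 48 7).eval 0 = 0 := by
    rw [gev 5, E6_0, E5_0]; norm_num
  have E8_0 : (gegen 48 8).eval 0 = (5/296429) := by
    rw [gev 6, E7_0, E6_0]; norm_num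
  have E9_0 : (gegen 48 9).eval 0 = 0 := by
    rw [gev 7, E8_0, E7_0]; norm_num
  have E10_0 : (gegen 48 10).eval 0 = ((-9)/3260719) := by
    rw [gev 8, E9_0, E8_0]; norm_num
  have E11_0 : (gegen 48 11).eval 0 = 0 := by
    rw [gev 9, E10_0, E9_0]; norm_num
  have eq0 : (0 : ℝ) = c 0 * 1 + c 1 * 0 + c 2 * ((-1)/47) + c 3 * 0 + c 4 * (3/2303) + c 5 * 0 + c 6 * ((-5)/39151) + c 7 * 0 + c 8 * (5/296429) + c 9 * 0 + c 10 * ((-9)/3260719) + c 11 * 0 := by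
    have hh := congrArg (Polynomial.eval (0 : ℝ)) hc
    rw [show hpoly.eval (0:ℝ) = 0 from by norm_num [hpoly]] at hh
    simpa only [Finset.sum_range_succ, Finset.sum_range_zero, Polynomial.eval_add,
      Polynomial.eval_mul, Polynomial.eval_C, zero_add,
      E0_0, E1_0, E2_0, E3_0, E4_0, E5_0, E6_0, E7_0, E8_0, E9_0, E10_0, E11_0] using hh
  have E0_1 : (gegen 48 0).eval 1 = 1 := gev0 _
  have E1_1 : (gegen 48 1).eval 1 = 1 := gev1 _
  have E2_1 : (gegen 48 2).eval 1 = 1 := by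
    rw [gev 0, E1_1, E0_1]; norm_num
  have E3_1 : (gegen 48 3).eval 1 = 1 := by
    rw [gev 1, E2_1, E1_1]; norm_num
  have E4_1 : (gegen 48 4).eval 1 = 1 := by
    rw [gev 2, E3_1, E2_1]; norm_num
  have E5_1 : (gegen 48 5).eval 1 = 1 := by
    rw [gev 3, E4_1, E3_1]; norm_num
  have E6_1 : (gegen 48 6).eval 1 = 1 := by
    rw [gev 4, E5_1, E4_1]; norm_num
  have E7_1 : (gegen 48 7).eval 1 = 1 := by
    rw [gev 5, E6_1, E5_1]; norm_num
  have E8_1 : (gegen 48 8).eval 1 = 1 := by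
    rw [gev 6, E7_1, E6_1]; norm_num
  have E9_1 : (gegen 48 9).eval 1 = 1 := by
    rw [gev 7, E8_1, E7_1]; norm_num
  have E10_1 : (gegen 48 10).eval 1 = 1 := by
    rw [gev 8, E9_1, E8_1]; norm_num
  have E11_1 : (gegen 48 11).eval 1 = 1 := by
    rw [gev 9, E10_1, E9_1]; norm_num
  have eq1 : ((35/9) : ℝ) = c 0 * 1 + c 1 * 1 + c 2 * 1 + c 3 * 1 + c 4 * 1 + c 5 * 1 + c 6 * 1 + c 7 * 1 + c 8 * 1 + c 9 * 1 + c 10 * 1 + c 11 * 1 := by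
    have hh := congrArg (Polynomial.eval (1 : ℝ)) hc
    rw [show hpoly.eval (1:ℝ) = (35/9) from by norm_num [hpoly]] at hh
    simpa only [Finset.sum_range_succ, Finset.sum_range_zero, Polynomial.eval_add,
      Polynomial.eval_mul, Polynomial.eval_C, zero_add,
      E0_1, E1_1, E2_1, E3_1, E4_1, E5_1, E6_1, E7_1, E8_1, E9_1, E10_1, E11_1] using hh
  have E0_2 : (gegen 48 0).eval (-1) = 1 := gev0 _
  have E1_2 : (gegen 48 1).eval (-1) = (-1) := gev1 _
  have E2_2 : (gegen 48 2).eval (-1) = 1 := by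
    rw [gev 0, E1_2, E0_2]; norm_num
  have E3_2 : (gegen 48 3).eval (-1) = (-1) := by
    rw [gev 1, E2_2, E1_2]; norm_num
  have E4_2 : (gegen 48 4).eval (-1) = 1 := by
    rw [gev 2, E3_2, E2_2]; norm_num
  have E5_2 : (gegen 48 5).eval (-1) = (-1) := by
    rw [gev 3, E4_2, E3_2]; norm_num
  have E6_2 : (gegen 48 6).eval (-1) = 1 := by
    rw [gev 4, E5_2, E4_2]; norm_num
  have E7_2 : (gegen 48 7).eval (-1) = (-1) := by
    rw [gev 5, E6_2, E5_2]; norm_num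
  have E8_2 : (gegen 48 8).eval (-1) = 1 := by
    rw [gev 6, E7_2, E6_2]; norm_num
  have E9_2 : (gegen 48 9).eval (-1) = (-1) := by
    rw [gev 7, E8_2, E7_2]; norm_num
  have E10_2 : (gegen 48 10).eval (-1) = 1 := by
    rw [gev 8, E9_2, E8_2]; norm_num
  have E11_2 : (gegen 48 11).eval (-1) = (-1) := by
    rw [gev 9, E10_2, E9_2]; norm_num
  have eq2 : (0 : ℝ) = c 0 * 1 + c 1 * (-1) + c 2 * 1 + c 3 * (-1) + c 4 * 1 + c 5 * (-1) + c 6 * 1 + c 7 * (-1) + c 8 * 1 + c 9 * (-1) + c 10 * 1 + c 11 * (-1) := by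
    have hh := congrArg (Polynomial.eval ((-1) : ℝ)) hc
    rw [show hpoly.eval ((-1):ℝ) = 0 from by norm_num [hpoly]] at hh
    simpa only [Finset.sum_range_succ, Finset.sum_range_zero, Polynomial.eval_add,
      Polynomial.eval_mul, Polynomial.eval_C, zero_add,
      E0_2, E1_2, E2_2, E3_2, E4_2, E5_2, E6_2, E7_2, E8_2, E9_2, E10_2, E11_2] using hh
  have E0_3 : (gegen 48 0).eval 2 = 1 := gev0 _
  have E1_3 : (gegen 48 1).eval 2 = 2 := gev1 _
  have E2_3 : (gegen 48 2).eval 2 = (191/47) := by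
    rw [gev 0, E1_3, E0_3]; norm_num
  have E3_3 : (gegen 48 3).eval 2 = (394/47) := by
    rw [gev 1, E2_3, E1_3]; norm_num
  have E4_3 : (gegen 48 4).eval 2 = (40403/2303) := by
    rw [gev 2, E3_3, E2_3]; norm_num
  have E5_3 : (gegen 48 5).eval 2 = (85726/2303) := by
    rw [gev 3, E4_3, E3_3]; norm_num
  have E6_3 : (gegen 48 6).eval 2 = (3133099/39151) := by
    rw [gev 4, E5_3, E4_3]; norm_num
  have E7_3 : (gegen 48 7).eval 2 = (974438/5593) := by
    rw [gev 5, E6_3, E5_3]; norm_num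
  have E8_3 : (gegen 48 8).eval 2 = (113799461/296429) := by
    rw [gev 6, E7_3, E6_3]; norm_num
  have E9_3 : (gegen 48 9).eval 2 = (253666138/296429) := by
    rw [gev 7, E8_3, E7_3]; norm_num
  have E10_3 : (gegen 48 10).eval 2 = (6289014103/3260719) := by
    rw [gev 8, E9_3, E8_3]; norm_num
  have E11_3 : (gegen 48 11).eval 2 = (9116438482/2075003) := by
    rw [gev 9, E10_3, E9_3]; norm_num
  have eq3 : ((125125/24) : ℝ) = c 0 * 1 + c 1 * 2 + c 2 * (191/47) + c 3 * (394/47) + c 4 * (40403/2303) + c 5 * (85726/2303) + c 6 * (3133099/39151) + c 7 * (974438/5593) + c 8 * (113799461/296429) + c 9 * (253666138/296429) + c 10 * (6289014103/3260719) + c 11 * (9116438482/2075003) := by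
    have hh := congrArg (Polynomial.eval (2 : ℝ)) hc
    rw [show hpoly.eval (2:ℝ) = (125125/24) from by norm_num [hpoly]] at hh
    simpa only [Finset.sum_range_succ, Finset.sum_range_zero, Polynomial.eval_add,
      Polynomial.eval_mul, Polynomial.eval_C, zero_add,
      E0_3, E1_3, E2_3, E3_3, E4_3, E5_3, E6_3, E7_3, E8_3, E9_3, E10_3, E11_3] using hh
  have E0_4 : (gegen 48 0).eval (-2) = 1 := gev0 _
  have E1_4 : (gegen 48 1).eval (-2) = (-2) := gev1 _
  have E2_4 : (gegen 48 2).eval (-2) = (191/47) := by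
    rw [gev 0, E1_4, E0_4]; norm_num
  have E3_4 : (gegen 48 3).eval (-2) = ((-394)/47) := by
    rw [gev 1, E2_4, E1_4]; norm_num
  have E4_4 : (gegen 48 4).eval (-2) = (40403/2303) := by
    rw [gev 2, E3_4, E2_4]; norm_num
  have E5_4 : (gegen 48 5).eval (-2) = ((-85726)/2303) := by
    rw [gev 3, E4_4, E3_4]; norm_num
  have E6_4 : (gegen 48 6).eval (-2) = (3133099/39151) := by
    rw [gev 4, E5_4, E4_4]; norm_num
  have E7_4 : (gegen 48 7).eval (-2) = ((-974438)/5593) := by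
    rw [gev 5, E6_4, E5_4]; norm_num
  have E8_4 : (gegen 48 8).eval (-2) = (113799461/296429) := by
    rw [gev 6, E7_4, E6_4]; norm_num
  have E9_4 : (gegen 48 9).eval (-2) = ((-253666138)/296429) := by
    rw [gev 7, E8_4, E7_4]; norm_num
  have E10_4 : (gegen 48 10).eval (-2) = (6289014103/3260719) := by
    rw [gev 8, E9_4, E8_4]; norm_num
  have E11_4 : (gegen 48 11).eval (-2) = ((-9116438482)/2075003) := by
    rw [gev 9, E10_4, E9_4]; norm_num
  have eq4 : (((-25025)/72) : ℝ) = c 0 * 1 + c 1 * (-2) + c 2 * (191/47) + c 3 * ((-394)/47) + c 4 * (40403/2303) + c 5 * ((-85726)/2303) + c 6 * (3133099/39151) + c 7 * ((-974438)/5593) + c 8 * (113799461/296429) + c 9 * ((-253666138)/296429) + c 10 * (6289014103/3260719) + c 11 * ((-9116438482)/2075003) := by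
    have hh := congrArg (Polynomial.eval ((-2) : ℝ)) hc
    rw [show hpoly.eval ((-2):ℝ) = ((-25025)/72) from by norm_num [hpoly]] at hh
    simpa only [Finset.sum_range_succ, Finset.sum_range_zero, Polynomial.eval_add,
      Polynomial.eval_mul, Polynomial.eval_C, zero_add,
      E0_4, E1_4, E2_4, E3_4, E4_4, E5_4, E6_4, E7_4, E8_4, E9_4, E10_4, E11_4] using hh
  have E0_5 : (gegen 48 0).eval 3 = 1 := gev0 _
  have E1_5 : (gegen 48 1).eval 3 = 3 := gev1 _
  have E2_5 : (gegen 48 2).eval 3 = (431/47) := by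
    rw [gev 0, E1_5, E0_5]; norm_num
  have E3_5 : (gegen 48 3).eval 3 = (1341/47) := by
    rw [gev 1, E2_5, E1_5]; norm_num
  have E4_5 : (gegen 48 4).eval 3 = (207903/2303) := by
    rw [gev 2, E3_5, E2_5]; norm_num
  have E5_5 : (gegen 48 5).eval 3 = (668349/2303) := by
    rw [gev 3, E4_5, E3_5]; norm_num
  have E6_5 : (gegen 48 6).eval 3 = (37081039/39151) := by
    rw [gev 4, E5_5, E4_5]; norm_num
  have E7_5 : (gegen 48 7).eval 3 = (17538267/5593) := by
    rw [gev 5, E6_5, E5_5]; norm_num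
  have E8_5 : (gegen 48 8).eval 3 = (3119807021/296429) := by
    rw [gev 6, E7_5, E6_5]; norm_num
  have E9_5 : (gegen 48 9).eval 3 = (10608294087/296429) := by
    rw [gev 7, E8_5, E7_5]; norm_num
  have E10_5 : (gegen 48 10).eval 3 = (57391834329/465817) := by
    rw [gev 8, E9_5, E8_5]; norm_num
  have E11_5 : (gegen 48 11).eval 3 = (890661023073/2075003) := by
    rw [gev 9, E10_5, E9_5]; norm_num
  have eq5 : ((3165400/9) : ℝ) = c 0 * 1 + c 1 * 3 + c 2 * (431/47) + c 3 * (1341/47) + c 4 * (207903/2303) + c 5 * (668349/2303) + c 6 * (37081039/39151) + c 7 * (17538267/5593) + c 8 * (3119807021/296429) + c 9 * (10608294087/296429) + c 10 * (57391834329/465817) + c 11 * (890661023073/2075003) := by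
    have hh := congrArg (Polynomial.eval (3 : ℝ)) hc
    rw [show hpoly.eval (3:ℝ) = (3165400/9) from by norm_num [hpoly]] at hh
    simpa only [Finset.sum_range_succ, Finset.sum_range_zero, Polynomial.eval_add,
      Polynomial.eval_mul, Polynomial.eval_C, zero_add,
      E0_5, E1_5, E2_5, E3_5, E4_5, E5_5, E6_5, E7_5, E8_5, E9_5, E10_5, E11_5] using hh
  have E0_6 : (gegen 48 0).eval (-3) = 1 := gev0 _
  have E1_6 : (gegen 48 1).eval (-3) = (-3) := gev1 _
  have E2_6 : (gegen 48 2).eval (-3) = (431/47) := by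
    rw [gev 0, E1_6, E0_6]; norm_num
  have E3_6 : (gegen 48 3).eval (-3) = ((-1341)/47) := by
    rw [gev 1, E2_6, E1_6]; norm_num
  have E4_6 : (gegen 48 4).eval (-3) = (207903/2303) := by
    rw [gev 2, E3_6, E2_6]; norm_num
  have E5_6 : (gegen 48 5).eval (-3) = ((-668349)/2303) := by
    rw [gev 3, E4_6, E3_6]; norm_num
  have E6_6 : (gegen 48 6).eval (-3) = (37081039/39151) := by
    rw [gev 4, E5_6, E4_6]; norm_num
  have E7_6 : (gegen 48 7).eval (-3) = ((-17538267)/5593) := by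
    rw [gev 5, E6_6, E5_6]; norm_num
  have E8_6 : (gegen 48 8).eval (-3) = (3119807021/296429) := by
    rw [gev 6, E7_6, E6_6]; norm_num
  have E9_6 : (gegen 48 9).eval (-3) = ((-10608294087)/296429) := by
    rw [gev 7, E8_6, E7_6]; norm_num
  have E10_6 : (gegen 48 10).eval (-3) = (57391834329/465817) := by
    rw [gev 8, E9_6, E8_6]; norm_num
  have E11_6 : (gegen 48 11).eval (-3) = ((-890661023073)/2075003) := by
    rw [gev 9, E10_6, E9_6]; norm_num
  have eq6 : (((-565250)/9) : ℝ) = c 0 * 1 + c 1 * (-3) + c 2 * (431/47) + c 3 * ((-1341)/47) + c 4 * (207903/2303) + c 5 * ((-668349)/2303) + c 6 * (37081039/39151) + c 7 * ((-17538267)/5593) + c 8 * (3119807021/296429) + c 9 * ((-10608294087)/296429) + c 10 * (57391834329/465817) + c 11 * ((-890661023073)/2075003) := by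
    have hh := congrArg (Polynomial.eval ((-3) : ℝ)) hc
    rw [show hpoly.eval ((-3):ℝ) = ((-565250)/9) from by norm_num [hpoly]] at hh
    simpa only [Finset.sum_range_succ, Finset.sum_range_zero, Polynomial.eval_add,
      Polynomial.eval_mul, Polynomial.eval_C, zero_add,
      E0_6, E1_6, E2_6, E3_6, E4_6, E5_6, E6_6, E7_6, E8_6, E9_6, E10_6, E11_6] using hh
  have E0_7 : (gegen 48 0).eval 4 = 1 := gev0 _
  have E1_7 : (gegen 48 1).eval 4 = 4 := gev1 _
  have E2_7 : (gegen 48 2).eval 4 = (767/47) := by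
    rw [gev 0, E1_7, E0_7]; norm_num
  have E3_7 : (gegen 48 3).eval 4 = (3188/47) := by
    rw [gev 1, E2_7, E1_7]; norm_num
  have E4_7 : (gegen 48 4).eval 4 = (660803/2303) := by
    rw [gev 2, E3_7, E2_7]; norm_num
  have E5_7 : (gegen 48 5).eval 4 = (2842172/2303) := by
    rw [gev 3, E4_7, E3_7]; norm_num
  have E6_7 : (gegen 48 6).eval 4 = (211114171/39151) := by
    rw [gev 4, E5_7, E4_7]; norm_num
  have E7_7 : (gegen 48 7).eval 4 = (133759852/5593) := by
    rw [gev 5, E6_7, E5_7]; norm_num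
  have E8_7 : (gegen 48 8).eval 4 = (31891250309/296429) := by
    rw [gev 6, E7_7, E6_7]; norm_num
  have E9_7 : (gegen 48 9).eval 4 = (145413257396/296429) := by
    rw [gev 7, E8_7, E7_7]; norm_num
  have E10_7 : (gegen 48 10).eval 4 = (1055393504017/465817) := by
    rw [gev 8, E9_7, E8_7]; norm_num
  have E11_7 : (gegen 48 11).eval 4 = (1293029236036/122059) := by
    rw [gev 9, E10_7, E9_7]; norm_num
  have eq7 : ((14389375/2) : ℝ) = c 0 * 1 + c 1 * 4 + c 2 * (767/47) + c 3 * (3188/47) + c 4 * (660803/2303) + c 5 * (2842172/2303) + c 6 * (211114171/39151) + c 7 * (133759852/5593) + c 8 * (31891250309/296429) + c 9 * (145413257396/296429) + c 10 * (1055393504017/465817) + c 11 * (1293029236036/122059) := by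
    have hh := congrArg (Polynomial.eval (4 : ℝ)) hc
    rw [show hpoly.eval (4:ℝ) = (14389375/2) from by norm_num [hpoly]] at hh
    simpa only [Finset.sum_range_succ, Finset.sum_range_zero, Polynomial.eval_add,
      Polynomial.eval_mul, Polynomial.eval_C, zero_add,
      E0_7, E1_7, E2_7, E3_7, E4_7, E5_7, E6_7, E7_7, E8_7, E9_7, E10_7, E11_7] using hh
  have E0_8 : (gegen 48 0).eval (-4) = 1 := gev0 _
  have E1_8 : (gegen 48 1).eval (-4) = (-4) := gev1 _
  have E2_8 : (gegen 48 2).eval (-4) = (767/47) := by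
    rw [gev 0, E1_8, E0_8]; norm_num
  have E3_8 : (gegen 48 3).eval (-4) = ((-3188)/47) := by
    rw [gev 1, E2_8, E1_8]; norm_num
  have E4_8 : (gegen 48 4).eval (-4) = (660803/2303) := by
    rw [gev 2, E3_8, E2_8]; norm_num
  have E5_8 : (gegen 48 5).eval (-4) = ((-2842172)/2303) := by
    rw [gev 3, E4_8, E3_8]; norm_num
  have E6_8 : (gegen 48 6).eval (-4) = (211114171/39151) := by
    rw [gev 4, E5_8, E4_8]; norm_num
  have E7_8 : (gegen 48 7).eval (-4) = ((-133759852)/5593) := by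
    rw [gev 5, E6_8, E5_8]; norm_num
  have E8_8 : (gegen 48 8).eval (-4) = (31891250309/296429) := by
    rw [gev 6, E7_8, E6_8]; norm_num
  have E9_8 : (gegen 48 9).eval (-4) = ((-145413257396)/296429) := by
    rw [gev 7, E8_8, E7_8]; norm_num
  have E10_8 : (gegen 48 10).eval (-4) = (1055393504017/465817) := by
    rw [gev 8, E9_8, E8_8]; norm_num
  have E11_8 : (gegen 48 11).eval (-4) = ((-1293029236036)/122059) := by
    rw [gev 9, E10_8, E9_8]; norm_num
  have eq8 : (((-4029025)/2) : ℝ) = c 0 * 1 + c 1 * (-4) + c 2 * (767/47) + c 3 * ((-3188)/47) + c 4 * (660803/2303) + c 5 * ((-2842172)/2303) + c 6 * (211114171/39151) + c 7 * ((-133759852)/5593) + c 8 * (31891250309/296429) + c 9 * ((-145413257396)/296429) + c 10 * (1055393504017/465817) + c 11 * ((-1293029236036)/122059) := by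
    have hh := congrArg (Polynomial.eval ((-4) : ℝ)) hc
    rw [show hpoly.eval ((-4):ℝ) = ((-4029025)/2) from by norm_num [hpoly]] at hh
    simpa only [Finset.sum_range_succ, Finset.sum_range_zero, Polynomial.eval_add,
      Polynomial.eval_mul, Polynomial.eval_C, zero_add,
      E0_8, E1_8, E2_8, E3_8, E4_8, E5_8, E6_8, E7_8, E8_8, E9_8, E10_8, E11_8] using hh
  have E0_9 : (gegen 48 0).eval 5 = 1 := gev0 _
  have E1_9 : (gegen 48 1).eval 5 = 5 := gev1 _
  have E2_9 : (gegen 48 2).eval 5 = (1199/47) := by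
    rw [gev 0, E1_9, E0_9]; norm_num
  have E3_9 : (gegen 48 3).eval 5 = (6235/47) := by
    rw [gev 1, E2_9, E1_9]; norm_num
  have E4_9 : (gegen 48 4).eval 5 = (1617503/2303) := by
    rw [gev 2, E3_9, E2_9]; norm_num
  have E5_9 : (gegen 48 5).eval 5 = (8710075/2303) := by
    rw [gev 3, E4_9, E3_9]; norm_num
  have E6_9 : (gegen 48 6).eval 5 = (810244495/39151) := by
    rw [gev 4, E5_9, E4_9]; norm_num
  have E7_9 : (gegen 48 7).eval 5 = (643083725/5593) := by
    rw [gev 5, E6_9, E5_9]; norm_num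
  have E8_9 : (gegen 48 8).eval 5 = (192114873005/296429) := by
    rw [gev 6, E7_9, E6_9]; norm_num
  have E9_9 : (gegen 48 9).eval 5 = (64578369425/17437) := by
    rw [gev 7, E8_9, E7_9]; norm_num
  have E10_9 : (gegen 48 10).eval 5 = (69915459162991/3260719) := by
    rw [gev 8, E9_9, E8_9]; norm_num
  have E11_9 : (gegen 48 11).eval 5 = (260810681510935/2075003) := by
    rw [gev 9, E10_9, E9_9]; norm_num
  have eq9 : (76145300 : ℝ) = c 0 * 1 + c 1 * 5 + c 2 * (1199/47) + c 3 * (6235/47) + c 4 * (1617503/2303) + c 5 * (8710075/2303) + c 6 * (810244495/39151) + c 7 * (643083725/5593) + c 8 * (192114873005/296429) + c 9 * (64578369425/17437) + c 10 * (69915459162991/3260719) + c 11 * (260810681510935/2075003) := by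
    have hh := congrArg (Polynomial.eval (5 : ℝ)) hc
    rw [show hpoly.eval (5:ℝ) = 76145300 from by norm_num [hpoly]] at hh
    simpa only [Finset.sum_range_succ, Finset.sum_range_zero, Polynomial.eval_add,
      Polynomial.eval_mul, Polynomial.eval_C, zero_add,
      E0_9, E1_9, E2_9, E3_9, E4_9, E5_9, E6_9, E7_9, E8_9, E9_9, E10_9, E11_9] using hh
  have E0_10 : (gegen 48 0).eval (-5) = 1 := gev0 _
  have E1_10 : (gegen 48 1).eval (-5) = (-5) := gev1 _
  have E2_10 : (gegen 48 2).eval (-5) = (1199/47) := by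
    rw [gev 0, E1_10, E0_10]; norm_num
  have E3_10 : (gegen 48 3).eval (-5) = ((-6235)/47) := by
    rw [gev 1, E2_10, E1_10]; norm_num
  have E4_10 : (gegen 48 4).eval (-5) = (1617503/2303) := by
    rw [gev 2, E3_10, E2_10]; norm_num
  have E5_10 : (gegen 48 5).eval (-5) = ((-8710075)/2303) := by
    rw [gev 3, E4_10, E3_10]; norm_num
  have E6_10 : (gegen 48 6).eval (-5) = (810244495/39151) := by
    rw [gev 4, E5_10, E4_10]; norm_num
  have E7_10 : (gegen 48 7).eval (-5) = ((-643083725)/5593) := by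
    rw [gev 5, E6_10, E5_10]; norm_num
  have E8_10 : (gegen 48 8).eval (-5) = (192114873005/296429) := by
    rw [gev 6, E7_10, E6_10]; norm_num
  have E9_10 : (gegen 48 9).eval (-5) = ((-64578369425)/17437) := by
    rw [gev 7, E8_10, E7_10]; norm_num
  have E10_10 : (gegen 48 10).eval (-5) = (69915459162991/3260719) := by
    rw [gev 8, E9_10, E8_10]; norm_num
  have E11_10 : (gegen 48 11).eval (-5) = ((-260810681510935)/2075003) := by
    rw [gev 9, E10_10, E9_10]; norm_num
  have eq10 : ((-27689200) : ℝ) = c 0 * 1 + c 1 * (-5) + c 2 * (1199/47) + c 3 * ((-6235)/47) + c 4 * (1617503/2303) + c 5 * ((-8710075)/2303) + c 6 * (810244495/39151) + c 7 * ((-643083725)/5593) + c 8 * (192114873005/296429) + c 9 * ((-64578369425)/17437) + c 10 * (69915459162991/3260719) + c 11 * ((-260810681510935)/2075003) := by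
    have hh := congrArg (Polynomial.eval ((-5) : ℝ)) hc
    rw [show hpoly.eval ((-5):ℝ) = (-27689200) from by norm_num [hpoly]] at hh
    simpa only [Finset.sum_range_succ, Finset.sum_range_zero, Polynomial.eval_add,
      Polynomial.eval_mul, Polynomial.eval_C, zero_add,
      E0_10, E1_10, E2_10, E3_10, E4_10, E5_10, E6_10, E7_10, E8_10, E9_10, E10_10, E11_10] using hh
  have E0_11 : (gegen 48 0).eval 6 = 1 := gev0 _
  have E1_11 : (gegen 48 1).eval 6 = 6 := gev1 _
  have E2_11 : (gegen 48 2).eval 6 = (1727/47) := by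
    rw [gev 0, E1_11, E0_11]; norm_num
  have E3_11 : (gegen 48 3).eval 6 = (10782/47) := by
    rw [gev 1, E2_11, E1_11]; norm_num
  have E4_11 : (gegen 48 4).eval 6 = (68547/47) := by
    rw [gev 2, E3_11, E2_11]; norm_num
  have E5_11 : (gegen 48 5).eval 6 = (443322/47) := by
    rw [gev 3, E4_11, E3_11]; norm_num
  have E6_11 : (gegen 48 6).eval 6 = (49537819/799) := by
    rw [gev 4, E5_11, E4_11]; norm_num
  have E7_11 : (gegen 48 7).eval 6 = (330652734/799) := by
    rw [gev 5, E6_11, E5_11]; norm_num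
  have E8_11 : (gegen 48 8).eval 6 = (6981659971/2491) := by
    rw [gev 6, E7_11, E6_11]; norm_num
  have E9_11 : (gegen 48 9).eval 6 = (815033720322/42347) := by
    rw [gev 7, E8_11, E7_11]; norm_num
  have E10_11 : (gegen 48 10).eval 6 = (62380950925617/465817) := by
    rw [gev 8, E9_11, E8_11]; norm_num
  have E11_11 : (gegen 48 11).eval 6 = (39956498144982/42347) := by
    rw [gev 9, E10_11, E9_11]; norm_num
  have eq11 : ((38101998935/72) : ℝ) = c 0 * 1 + c 1 * 6 + c 2 * (1727/47) + c 3 * (10782/47) + c 4 * (68547/47) + c 5 * (443322/47) + c 6 * (49537819/799) + c 7 * (330652734/799) + c 8 * (6981659971/2491) + c 9 * (815033720322/42347) + c 10 * (62380950925617/465817) + c 11 * (39956498144982/42347) := by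
    have hh := congrArg (Polynomial.eval (6 : ℝ)) hc
    rw [show hpoly.eval (6:ℝ) = (38101998935/72) from by norm_num [hpoly]] at hh
    simpa only [Finset.sum_range_succ, Finset.sum_range_zero, Polynomial.eval_add,
      Polynomial.eval_mul, Polynomial.eval_C, zero_add,
      E0_11, E1_11, E2_11, E3_11, E4_11, E5_11, E6_11, E7_11, E8_11, E9_11, E10_11, E11_11] using hh
  have hc3 : c 3 = (((-118957)/811814400) : ℝ) := by
    linear_combination (((-92775670163)/432967680000)) * eq0 + ((245830696403/432967680000)) * eq1 + (((-121501366573)/606154752000)) * eq2 + (((-251769065939)/606154752000)) * eq3 + ((225211121389/1212309504000)) * eq4 + ((179804136851/1212309504000)) * eq5 + (((-168309729901)/3636928512000)) * eq6 + (((-137561791187)/3636928512000)) * eq7 + ((131154934957/18184642560000)) * eq8 + ((110922482963/18184642560000)) * eq9 + (((-9712660967)/18184642560000)) * eq10 + (((-8434151833)/18184642560000)) * eq11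
  have hc4 : c 4 = ((122059/1563494400) : ℝ) := by
    linear_combination (((-3152142091)/6948864000)) * eq0 + ((13720553819/41693184000)) * eq1 + ((13720553819/41693184000)) * eq2 + (((-43721797)/359424000)) * eq3 + (((-43721797)/359424000)) * eq4 + ((611794253/27795456000)) * eq5 + ((611794253/27795456000)) * eq6 + (((-353133137)/125079552000)) * eq7 + (((-353133137)/125079552000)) * eq8 + ((45723433/250159104000)) * eq9 + ((45723433/250159104000)) * eq10 + (0) * eq11
  have hc5 : c 5 = ((376856011/32716120320) : ℝ) := by
    linear_combination ((120588955949/1744859750400)) * eq0 + (((-199227345947)/1744859750400)) * eq1 + (((-7496578537)/1744859750400)) * eq2 + ((161913212167/1744859750400)) * eq3 + (((-65421518729)/3489719500800)) * eq4 + (((-149217966121)/3489719500800)) * eq5 + ((103114024223/10469158502400)) * eq6 + ((122572813447/10469158502400)) * eq7 + (((-10191433)/5553930240)) * eq8 + (((-701020369)/361005465600)) * eq9 + ((1536506657/10469158502400)) * eq10 + ((1566090337/10469158502400)) * eq11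
  have hc6 : c 6 = ((231656467/3008378880) : ℝ) := by
    linear_combination ((2075400103/40111718400)) * eq0 + (((-363707197)/8913715200)) * eq1 + (((-363707197)/8913715200)) * eq2 + ((30308467/1542758400)) * eq3 + ((30308467/1542758400)) * eq4 + (((-873408473)/160446873600)) * eq5 + (((-873408473)/160446873600)) * eq6 + ((188724599/240670310400)) * eq7 + ((188724599/240670310400)) * eq8 + (((-25677463)/481340620800)) * eq9 + (((-25677463)/481340620800)) * eq10 + (0) * eq11
  have hc7 : c 7 = ((399983395/1342199808) : ℝ) := by
    linear_combination (((-3666709277)/477226598400)) * eq0 + ((4654656797/477226598400)) * eq1 + ((326226107/95445319680)) * eq2 + (((-245650153)/31815106560)) * eq3 + (((-2167687)/4242014208)) * eq4 + ((147962815/38178127872)) * eq5 + (((-124179781)/572671918080)) * eq6 + (((-686223547)/572671918080)) * eq7 + ((9938761/98736537600)) * eq8 + ((20742839/98736537600)) * eq9 + (((-30107119)/2863359590400)) * eq10 + (((-47619601)/2863359590400)) * eq11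
  have hc8 : c 8 = ((439011349/577290240) : ℝ) := by
    linear_combination (((-41203631)/18473287680)) * eq0 + ((112346591/61577625600)) * eq1 + ((112346591/61577625600)) * eq2 + (((-1566839)/1592524800)) * eq3 + (((-1566839)/1592524800)) * eq4 + ((122763953/369465753600)) * eq5 + ((122763953/369465753600)) * eq6 + (((-34597499)/554198630400)) * eq7 + (((-34597499)/554198630400)) * eq8 + ((211735/44335890432)) * eq9 + ((211735/44335890432)) * eq10 + (0) * eq11
  have hc9 : c 9 = ((3260719/2589120) : ℝ) := by
    linear_combination ((3853577/11930664960)) * eq0 + (((-21046459)/59653324800)) * eq1 + (((-11984201)/59653324800)) * eq2 + ((15795431/59653324800)) * eq3 + ((9697463/119306649600)) * eq4 + (((-16049513)/119306649600)) * eq5 + (((-6902561)/357919948800)) * eq6 + ((15795431/357919948800)) * eq7 + ((719899/357919948800)) * eq8 + (((-3006637)/357919948800)) * eq9 + ((42347/3937119436800)) * eq10 + ((550511/787423887360)) * eq11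
  have hc10 : c 10 = ((16303595/14729216) : ℝ) := by
    linear_combination ((3260719/106050355200)) * eq0 + (((-3260719)/127260426240)) * eq1 + (((-3260719)/127260426240)) * eq2 + ((465817/31815106560)) * eq3 + ((465817/31815106560)) * eq4 + (((-465817)/84840284160)) * eq5 + (((-465817)/84840284160)) * eq6 + ((465817/381781278720)) * eq7 + ((465817/381781278720)) * eq8 + (((-465817)/3817812787200)) * eq9 + (((-465817)/3817812787200)) * eq10 + (0) * eq11
  have hc11 : c 11 = ((2075003/5523456) : ℝ) := by
    linear_combination (((-2075003)/477226598400)) * eq0 + ((2075003/477226598400)) * eq1 + ((296429/95445319680)) * eq2 + (((-296429)/95445319680)) * eq3 + (((-296429)/190890639360)) * eq4 + ((296429/190890639360)) * eq5 + ((296429/572671918080)) * eq6 + (((-296429)/572671918080)) * eq7 + (((-296429)/2863359590400)) * eq8 + ((296429/2863359590400)) * eq9 + ((296429/31496955494400)) * eq10 + (((-296429)/31496955494400)) * eq11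
  refine ⟨by rw [hc3]; norm_num, ?_⟩
  intro i h4 h11
  interval_cases i <;>
    simp only [hc4, hc5, hc6, hc7, hc8, hc9, hc10, hc11] <;> norm_num
end

section
/- Suppose nonnegative reals A_{-1}, A_{±1/2}, A_{±1/3}, A_{±1/6}, A_0 satisfy, for k = 0,1,...,8, the equations 1 + Σ_t A_t t^k = f_k^{(0)} · N with N = 52416000, where f_k^{(0)} is the zeroth Gegenbauer coefficient (dimension 48) of t^k, and the sum is over t ∈ {-1,±1/2,±1/3,±1/6,0}. Then A_{-1} = 1, A_{1/2} = A_{-1/2} = 36848, A_{1/3} = A_{-1/3} = 1678887, A_{1/6} = A_{-1/6} = 12608784, A_0 = 23766960. -/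
open Polynomial Finset
open scoped Classical

theorem stmt17 (Am1 Ah Amh A3 Am3 A6 Am6 A0 : ℝ)
    (hAm1 : 0 ≤ Am1) (hAh : 0 ≤ Ah) (hAmh : 0 ≤ Amh) (hA3 : 0 ≤ A3)
    (hAm3 : 0 ≤ Am3) (hA6 : 0 ≤ A6) (hAm6 : 0 ≤ Am6) (hA0 : 0 ≤ A0)
    (h0 : 1 + (Am1 + Ah + Amh + A3 + Am3 + A6 + Am6 + A0) = 52416000)
    (h1 : 1 + (-Am1 + Ah / 2 - Amh / 2 + A3 / 3 - Am3 / 3 + A6 / 6 - Am6 / 6) = 0)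
    (h2 : 1 + (Am1 + Ah / 4 + Amh / 4 + A3 / 9 + Am3 / 9 + A6 / 36 + Am6 / 36) =
      (1 / 48) * 52416000)
    (h3 : 1 + (-Am1 + Ah / 8 - Amh / 8 + A3 / 27 - Am3 / 27 + A6 / 216 - Am6 / 216) = 0)
    (h4 : 1 + (Am1 + Ah / 16 + Amh / 16 + A3 / 81 + Am3 / 81 + A6 / 1296 + Am6 / 1296) =
      (3 / (48 * 50)) * 52416000)
    (h5 : 1 + (-Am1 + Ah / 32 - Amh / 32 + A3 / 243 - Am3 / 243 + A6 / 7776 - Am6 / 7776) = 0)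
    (h6 : 1 + (Am1 + Ah / 64 + Amh / 64 + A3 / 729 + Am3 / 729 + A6 / 46656 + Am6 / 46656) =
      (15 / (48 * 50 * 52)) * 52416000)
    (h7 : 1 + (-Am1 + Ah / 128 - Amh / 128 + A3 / 2187 - Am3 / 2187 + A6 / 279936 -
      Am6 / 279936) = 0)
    (h8 : 1 + (Am1 + Ah / 256 + Amh / 256 + A3 / 6561 + Am3 / 6561 + A6 / 1679616 +
      Am6 / 1679616) = (105 / (48 * 50 * 52 * 54)) * 52416000) :
    Am1 = 1 ∧ Ah = 36848 ∧ Amh = 36848 ∧ A3 = 1678887 ∧ Am3 = 1678887 ∧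
      A6 = 12608784 ∧ Am6 = 12608784 ∧ A0 = 23766960 := by
  refine ⟨?_, ?_, ?_, ?_, ?_, ?_, ?_, ?_⟩ <;> linarith
end
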